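/- Let G and H be locally finite games. Then G + H has infinite rank if and only if at least one of G and H has infinite rank. -/

import Mathlib

open scoped Classical

universe u

/-- `PosP Γ n` is the set `Pₙ` of positions from which the second player can win
within `n` rounds: `P₀` is the set of terminal positions, and
`Pₙ₊₁ = {x : every option of x has an option in Pₙ}`. -/
def PosP {V : Type*} (Γ : V → Finset V) : ℕ → Set V
  | 0 => {x | Γ x = ∅}
  | n + 1 => {x | ∀ y ∈ Γ x, ∃ z ∈ Γ y, z ∈ PosP Γ n}

/-- `PosN Γ n` is the set `Nₙ`: for `n ≥ 1`, `Nₙ = {x : some option of x lies in Pₙ₋₁}`. -/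
def PosN {V : Type*} (Γ : V → Finset V) : ℕ → Set V
  | 0 => ∅
  | n + 1 => {x | ∃ y ∈ Γ x, y ∈ PosP Γ n}

/-- The P-positions `𝒫 = ⋃ₙ Pₙ` (second player wins). -/
def PPos {V : Type*} (Γ : V → Finset V) : Set V := ⋃ n, PosP Γ n

/-- The N-positions `𝒩 = ⋃ₙ Nₙ` (first player wins). -/
def NPos {V : Type*} (Γ : V → Finset V) : Set V := ⋃ n, PosN Γ n

/-- The D-positions `𝒟 = V ∖ (𝒫 ∪ 𝒩)` (draws). -/
def DPos {V : Type*} (Γ : V → Finset V) : Set V := (PPos Γ ∪ NPos Γ)ᶜ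

/-- The mex (least natural number not attained) of the values `g y`, `y ∈ s`. -/
noncomputable def mexF {V : Type*} (s : Finset V) (g : V → ℕ∞) : ℕ :=
  sInf {n : ℕ | ∀ y ∈ s, g y ≠ (n : ℕ∞)}

/-- The approximants `𝒢ₙ` of the extended Sprague-Grundy function. -/
noncomputable def Gfun {V : Type*} (Γ : V → Finset V) : ℕ → V → ℕ∞
  | 0 => fun x => if Γ x = ∅ then 0 else ⊤
  | n + 1 => fun x =>
      let m := mexF (Γ x) (Gfun Γ n)
      if ∀ y ∈ Γ x, Gfun Γ n y ≤ (m : ℕ∞) ∨ ∃ z ∈ Γ y, Gfun Γ n z = (m : ℕ∞)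
      then (m : ℕ∞) else ⊤

/-- `x` has finite rank with (finite) Sprague-Grundy value `m`:
`𝒢ₙ(x) = m` for all sufficiently large `n`. -/
def HasGVal {V : Type*} (Γ : V → Finset V) (x : V) (m : ℕ) : Prop :=
  ∃ n₀ : ℕ, ∀ n ≥ n₀, Gfun Γ n x = (m : ℕ∞)

/-- `x` has infinite rank: `𝒢ₙ(x) = ∞` for all `n`. -/
def InfiniteRank {V : Type*} (Γ : V → Finset V) (x : V) : Prop :=
  ∀ n : ℕ, Gfun Γ n x = ⊤

/-- The rank of `x`: the least `n` with `𝒢ₙ(x) < ∞`, or `∞` if there is none. -/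
noncomputable def rank {V : Type*} (Γ : V → Finset V) (x : V) : ℕ∞ :=
  sInf ((↑) '' {n : ℕ | Gfun Γ n x ≠ ⊤})

/-- For `x` of infinite rank, the set `𝒜` with `𝒢(x) = ∞(𝒜)`:
the set of finite Sprague-Grundy values of finite-rank options of `x`. -/
def ValSet {V : Type*} (Γ : V → Finset V) (x : V) : Set ℕ :=
  {a | ∃ y ∈ Γ x, HasGVal Γ y a}

/-- The graph of the disjunctive sum: move in exactly one coordinate. -/
noncomputable def sumGraph {V W : Type*} (Γ : V → Finset V) (Δ : W → Finset W) :
    V × W → Finset (V × W) := fun p =>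
  (Γ p.1).image (fun u => (u, p.2)) ∪ (Δ p.2).image (fun w => (p.1, w))

/-- Two (positions of possibly different) games lie in the same outcome class. -/
def SameOutcome {V W : Type*} (Γ : V → Finset V) (x : V) (Δ : W → Finset W) (y : W) : Prop :=
  (x ∈ PPos Γ ↔ y ∈ PPos Δ) ∧ (x ∈ NPos Γ ↔ y ∈ NPos Δ) ∧ (x ∈ DPos Γ ↔ y ∈ DPos Δ)

/-- Equivalence of games: `G + X` and `H + X` have the same outcome for every
locally finite game `X`. -/
def GameEquiv {V W : Type*} (Γ : V → Finset V) (x : V) (Δ : W → Finset W) (y : W) : Prop :=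
  ∀ (X : Type u) (Ξ : X → Finset X) (z : X),
    SameOutcome (sumGraph Γ Ξ) (x, z) (sumGraph Δ Ξ) (y, z)

/-- The nim heap `*m`: positions `0, …, m`, where from `k` one can move to any `j < k`. -/
def nimGraph (m : ℕ) : Fin (m + 1) → Finset (Fin (m + 1)) :=
  fun k => Finset.univ.filter (fun j => j < k)

/-- The reduced graph `R(V)`: the induced graph on the complement of the P-positions. -/
noncomputable def reducedGraph {V : Type*} (Γ : V → Finset V) :
    {x : V // x ∉ PPos Γ} → Finset {x : V // x ∉ PPos Γ} := fun x =>
  (Γ x.1).subtype (fun y => y ∉ PPos Γ)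

/-- The vertex set of `R^{(k)}(V)`: positions which do not have finite rank with
Sprague-Grundy value `< k`. -/
def RkSet {V : Type*} (Γ : V → Finset V) (k : ℕ) : Set V :=
  {x | ¬ ∃ m < k, HasGVal Γ x m}

/-- The induced game graph `R^{(k)}(V)` on `RkSet Γ k`. -/
noncomputable def RkGraph {V : Type*} (Γ : V → Finset V) (k : ℕ) :
    RkSet Γ k → Finset (RkSet Γ k) := fun x =>
  (Γ x.1).subtype (fun y => y ∈ RkSet Γ k)

/-- `V` is `k`-stable: every infinite-rank position `x`, with `𝒢(x) = ∞(𝒜)`,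
has `{0, 1, …, k} ⊆ 𝒜`. -/
def kStable {V : Type*} (Γ : V → Finset V) (k : ℕ) : Prop :=
  ∀ x, InfiniteRank Γ x → ∀ j ≤ k, j ∈ ValSet Γ x

/-- `l` is a directed walk from `o` to `x` in the graph `Γ`. -/
def IsWalk {V : Type*} (Γ : V → Finset V) (o x : V) (l : List V) : Prop :=
  l.head? = some o ∧ l.getLast? = some x ∧ l.Chain' (fun a b => b ∈ Γ a)

/-- `Γ` is a tree with root `o`: `o` has no incoming arcs, and every vertex is
reached from `o` by a unique directed walk. -/
def IsTree {V : Type*} (Γ : V → Finset V) (o : V) : Prop :=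
  (∀ x, o ∉ Γ x) ∧ ∀ x, ∃! l : List V, IsWalk Γ o x l

/-- `f` is a mex labelling: `f x` is the least natural number not attained by `f`
on the options of `x`, for every `x`. -/
def MexLabelling {V : Type*} (Γ : V → Finset V) (f : V → ℕ) : Prop :=
  ∀ x, f x = sInf {n : ℕ | ∀ y ∈ Γ x, f y ≠ n}

section AuxLemmas

lemma xor_xor_right (a b : ℕ) : a ^^^ b ^^^ b = a := by rw [Nat.xor_assoc, Nat.xor_self, Nat.xor_zero]

lemma xor_right_inj {a b c : ℕ} (h : a ^^^ c = b ^^^ c) : a = b := by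
  calc a = a ^^^ c ^^^ c := (xor_xor_right a c).symm
    _ = b ^^^ c ^^^ c := by rw [h]
    _ = b := xor_xor_right b c

lemma xor_left_inj {a b c : ℕ} (h : c ^^^ a = c ^^^ b) : a = b := by
  have : a ^^^ c = b ^^^ c := by rw [Nat.xor_comm a c, Nat.xor_comm b c]; exact h
  exact xor_right_inj this

lemma xor_mid (a m : ℕ) : a ^^^ (m ^^^ a) = m := by
  rw [Nat.xor_comm m a, ← Nat.xor_assoc, Nat.xor_self, Nat.zero_xor]

lemma ne_top_of_le_coe {v : ℕ∞} {m : ℕ} (h : v ≤ (m : ℕ∞)) : v ≠ ⊤ := by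
  intro hv; rw [hv] at h; exact absurd h (by simp)

lemma ne_top_ex {v : ℕ∞} (h : v ≠ ⊤) : ∃ a : ℕ, v = (a : ℕ∞) := by
  lift v to ℕ using h; exact ⟨v, rfl⟩

/-! ### mexF -/

lemma mexF_set_nonempty {V : Type*} (s : Finset V) (g : V → ℕ∞) :
    {n : ℕ | ∀ y ∈ s, g y ≠ (n : ℕ∞)}.Nonempty := by
  have hfin : {n : ℕ | (↑n : ℕ∞) ∈ (s.image g : Finset ℕ∞)}.Finite := by
    apply Set.Finite.preimage (f := fun n : ℕ => (n : ℕ∞))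
    · exact Function.Injective.injOn (fun a b h => by exact_mod_cast h)
    · exact (s.image g).finite_toSet
  obtain ⟨n, hn⟩ := (Set.Finite.infinite_compl hfin).nonempty
  refine ⟨n, fun y hy hgy => hn ?_⟩
  exact Finset.mem_image.2 ⟨y, hy, hgy⟩

lemma mexF_spec {V : Type*} (s : Finset V) (g : V → ℕ∞) :
    ∀ y ∈ s, g y ≠ ((mexF s g : ℕ) : ℕ∞) :=
  Nat.sInf_mem (mexF_set_nonempty s g)

lemma mexF_min {V : Type*} {s : Finset V} {g : V → ℕ∞} {j : ℕ} (h : j < mexF s g) :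
    ∃ y ∈ s, g y = (j : ℕ∞) := by
  have hj := Nat.notMem_of_lt_sInf h
  simp only [Set.mem_setOf_eq, not_forall] at hj
  obtain ⟨y, hy, hgy⟩ := hj
  exact ⟨y, hy, by simpa using hgy⟩

lemma mexF_eq {V : Type*} {s : Finset V} {g : V → ℕ∞} {m : ℕ}
    (h1 : ∀ y ∈ s, g y ≠ (m : ℕ∞)) (h2 : ∀ j < m, ∃ y ∈ s, g y = (j : ℕ∞)) :
    mexF s g = m := by
  refine le_antisymm (Nat.sInf_le h1) ?_
  by_contra hcon
  push_neg at hcon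
  obtain ⟨y, hy, hgy⟩ := h2 _ hcon
  exact mexF_spec s g y hy hgy

lemma mexF_empty {V : Type*} (g : V → ℕ∞) : mexF (∅ : Finset V) g = 0 := by
  apply Nat.sInf_eq_zero.mpr; left; simp

lemma mexF_image {V W : Type*} (s : Finset V) (f : V → W) (g : W → ℕ∞) :
    mexF (s.image f) g = mexF s (fun v => g (f v)) := by
  unfold mexF; congr 1; ext n
  simp [Finset.forall_mem_image]

/-! ### Gfun basics -/

lemma gfun_zero {V : Type*} (Γ : V → Finset V) (x : V) :
    Gfun Γ 0 x = if Γ x = ∅ then 0 else ⊤ := rfl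

lemma gfun_succ {V : Type*} (Γ : V → Finset V) (n : ℕ) (x : V) :
    Gfun Γ (n + 1) x =
      if ∀ y ∈ Γ x, Gfun Γ n y ≤ ((mexF (Γ x) (Gfun Γ n) : ℕ) : ℕ∞) ∨
          ∃ z ∈ Γ y, Gfun Γ n z = ((mexF (Γ x) (Gfun Γ n) : ℕ) : ℕ∞)
      then ((mexF (Γ x) (Gfun Γ n) : ℕ) : ℕ∞) else ⊤ := rfl

lemma gfun_zero_fin {V : Type*} {Γ : V → Finset V} {x : V} {a : ℕ}
    (h : Gfun Γ 0 x = (a : ℕ∞)) : Γ x = ∅ ∧ a = 0 := by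
  rw [gfun_zero] at h
  split_ifs at h with hc
  · exact ⟨hc, by exact_mod_cast h.symm⟩
  · exact absurd h.symm (by simp)

lemma gfun_terminal {V : Type*} {Γ : V → Finset V} {x : V} (h : Γ x = ∅) :
    ∀ n, Gfun Γ n x = 0
  | 0 => by rw [gfun_zero, if_pos h]
  | n + 1 => by
    rw [gfun_succ, h, if_pos (by simp), mexF_empty]
    simp

lemma fin_succ {V : Type*} {Γ : V → Finset V} {n : ℕ} {x : V} (h : Gfun Γ (n + 1) x ≠ ⊤) :
    Gfun Γ (n + 1) x = ((mexF (Γ x) (Gfun Γ n) : ℕ) : ℕ∞) ∧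
      ∀ y ∈ Γ x, Gfun Γ n y ≤ ((mexF (Γ x) (Gfun Γ n) : ℕ) : ℕ∞) ∨
        ∃ z ∈ Γ y, Gfun Γ n z = ((mexF (Γ x) (Gfun Γ n) : ℕ) : ℕ∞) := by
  rw [gfun_succ] at h ⊢
  split_ifs at h ⊢ with hc
  · exact ⟨rfl, hc⟩
  · exact absurd rfl h

end AuxLemmas
section StabLemmas

lemma gfun_stab {V : Type*} (Γ : V → Finset V) :
    ∀ n, ∀ x, Gfun Γ n x ≠ ⊤ → Gfun Γ (n + 1) x = Gfun Γ n x := by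
  intro n
  induction n with
  | zero =>
    intro x h
    have hx : Γ x = ∅ := by
      rw [gfun_zero] at h
      by_contra hc
      rw [if_neg hc] at h
      exact h rfl
    rw [gfun_terminal hx 1, gfun_terminal hx 0]
  | succ n ih =>
    intro x h
    obtain ⟨hval, hcond⟩ := fin_succ h
    have hspec := mexF_spec (Γ x) (Gfun Γ n)
    have hmex2 : mexF (Γ x) (Gfun Γ (n + 1)) = mexF (Γ x) (Gfun Γ n) := by
      apply mexF_eq
      · intro y hy
        by_cases hyt : Gfun Γ n y = ⊤
        · rcases hcond y hy with hle | ⟨z, hz, hzv⟩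
          · rw [hyt] at hle; exact absurd hle (by simp)
          · intro hcontra
            have hyne : Gfun Γ (n + 1) y ≠ ⊤ := by rw [hcontra]; simp
            obtain ⟨hy1, _⟩ := fin_succ hyne
            have hmm : mexF (Γ y) (Gfun Γ n) = mexF (Γ x) (Gfun Γ n) := by
              exact_mod_cast hy1.symm.trans hcontra
            exact mexF_spec (Γ y) (Gfun Γ n) z hz (by rw [hzv, hmm])
        · rw [ih y hyt]; exact hspec y hy
      · intro j hj
        obtain ⟨y, hy, hyv⟩ := mexF_min hj
        exact ⟨y, hy, by rw [ih y (by rw [hyv]; simp)]; exact hyv⟩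
    have hcond2 : ∀ y ∈ Γ x,
        Gfun Γ (n + 1) y ≤ ((mexF (Γ x) (Gfun Γ n) : ℕ) : ℕ∞) ∨
        ∃ z ∈ Γ y, Gfun Γ (n + 1) z = ((mexF (Γ x) (Gfun Γ n) : ℕ) : ℕ∞) := by
      intro y hy
      rcases hcond y hy with hle | ⟨z, hz, hzv⟩
      · left; rw [ih y (ne_top_of_le_coe hle)]; exact hle
      · right; exact ⟨z, hz, by rw [ih z (by rw [hzv]; simp)]; exact hzv⟩
    rw [gfun_succ, hmex2, if_pos hcond2, hval]

lemma gfun_stab_ge {V : Type*} {Γ : V → Finset V} {n : ℕ} {x : V}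
    (h : Gfun Γ n x ≠ ⊤) {N : ℕ} (hnN : n ≤ N) : Gfun Γ N x = Gfun Γ n x := by
  induction N, hnN using Nat.le_induction with
  | base => rfl
  | succ N hN ihN => rw [gfun_stab Γ N x (by rw [ihN]; exact h), ihN]

lemma gfun_reply_lt {V : Type*} {Γ : V → Finset V} {n : ℕ} {x : V} {c j : ℕ}
    (h : Gfun Γ n x = (c : ℕ∞)) (hj : j < c) : ∃ z ∈ Γ x, Gfun Γ n z = (j : ℕ∞) := by
  cases n with
  | zero => obtain ⟨-, hc⟩ := gfun_zero_fin h; omega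
  | succ n =>
    obtain ⟨h1, -⟩ := fin_succ (show Gfun Γ (n + 1) x ≠ ⊤ by rw [h]; simp)
    have hc : mexF (Γ x) (Gfun Γ n) = c := by exact_mod_cast h1.symm.trans h
    obtain ⟨z, hz, hzv⟩ := mexF_min (show j < mexF (Γ x) (Gfun Γ n) by omega)
    exact ⟨z, hz, by rw [gfun_stab Γ n z (by rw [hzv]; simp)]; exact hzv⟩

lemma gfun_opt_ne {V : Type*} {Γ : V → Finset V} {n : ℕ} {x : V} {c : ℕ}
    (h : Gfun Γ n x = (c : ℕ∞)) {y : V} (hy : y ∈ Γ x) : Gfun Γ n y ≠ (c : ℕ∞) := by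
  cases n with
  | zero =>
    obtain ⟨he, -⟩ := gfun_zero_fin h
    rw [he] at hy
    exact absurd hy (Finset.notMem_empty y)
  | succ n =>
    obtain ⟨h1, hcond⟩ := fin_succ (show Gfun Γ (n + 1) x ≠ ⊤ by rw [h]; simp)
    have hc : mexF (Γ x) (Gfun Γ n) = c := by exact_mod_cast h1.symm.trans h
    rcases hcond y hy with hle | ⟨z, hz, hzv⟩
    · intro hcontra
      rw [gfun_stab Γ n y (ne_top_of_le_coe hle)] at hcontra
      exact mexF_spec (Γ x) (Gfun Γ n) y hy (by rw [hcontra, hc])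
    · intro hcontra
      obtain ⟨hy1, -⟩ := fin_succ (show Gfun Γ (n + 1) y ≠ ⊤ by rw [hcontra]; simp)
      have hcy : mexF (Γ y) (Gfun Γ n) = c := by exact_mod_cast hy1.symm.trans hcontra
      exact mexF_spec (Γ y) (Gfun Γ n) z hz (by rw [hzv, hc, hcy])

end StabLemmas

section SumGraphLemmas

lemma mem_sumGraph {V W : Type*} {Γ : V → Finset V} {Δ : W → Finset W} {x : V} {y : W}
    {p : V × W} :
    p ∈ sumGraph Γ Δ (x, y) ↔ (∃ u ∈ Γ x, p = (u, y)) ∨ ∃ w ∈ Δ y, p = (x, w) := by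
  constructor
  · intro hp
    rcases Finset.mem_union.1 hp with hm | hm
    · left; obtain ⟨u, hu, he⟩ := Finset.mem_image.1 hm; exact ⟨u, hu, he.symm⟩
    · right; obtain ⟨w, hw, he⟩ := Finset.mem_image.1 hm; exact ⟨w, hw, he.symm⟩
  · rintro (⟨u, hu, rfl⟩ | ⟨w, hw, rfl⟩)
    · exact Finset.mem_union_left _ (Finset.mem_image_of_mem _ hu)
    · exact Finset.mem_union_right _ (Finset.mem_image_of_mem _ hw)

lemma sum_mem_left {V W : Type*} {Γ : V → Finset V} {Δ : W → Finset W} {x u : V} {y : W}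
    (hu : u ∈ Γ x) : (u, y) ∈ sumGraph Γ Δ (x, y) :=
  mem_sumGraph.2 (Or.inl ⟨u, hu, rfl⟩)

lemma sum_mem_right {V W : Type*} {Γ : V → Finset V} {Δ : W → Finset W} {x : V} {y w : W}
    (hw : w ∈ Δ y) : (x, w) ∈ sumGraph Γ Δ (x, y) :=
  mem_sumGraph.2 (Or.inr ⟨w, hw, rfl⟩)

lemma sumGraph_empty {V W : Type*} {Γ : V → Finset V} {Δ : W → Finset W} {x : V} {y : W} :
    sumGraph Γ Δ (x, y) = ∅ ↔ Γ x = ∅ ∧ Δ y = ∅ := by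
  simp [sumGraph, Finset.union_eq_empty, Finset.image_eq_empty]

end SumGraphLemmas
section SumVal

lemma sum_val {V W : Type*} (Γ : V → Finset V) (Δ : W → Finset W) :
    ∀ (N n k : ℕ) (x : V) (y : W) (a b : ℕ), n + k ≤ N →
      Gfun Γ n x = (a : ℕ∞) → Gfun Δ k y = (b : ℕ∞) →
      Gfun (sumGraph Γ Δ) (n + k) (x, y) = ((a ^^^ b : ℕ) : ℕ∞) := by
  intro N
  induction N with
  | zero =>
    intro n k x y a b hN hx hy
    have hn : n = 0 := by omega
    have hk : k = 0 := by omega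
    subst hn; subst hk
    obtain ⟨hx1, ha⟩ := gfun_zero_fin hx
    obtain ⟨hy1, hb⟩ := gfun_zero_fin hy
    subst ha; subst hb
    have hse : sumGraph Γ Δ (x, y) = ∅ := sumGraph_empty.2 ⟨hx1, hy1⟩
    simpa using gfun_terminal hse 0
  | succ N ih =>
    intro n k x y a b hN hx hy
    rcases Nat.lt_or_ge (n + k) (N + 1) with hlt | hge
    · exact ih n k x y a b (by omega) hx hy
    have hnk : n + k = N + 1 := le_antisymm hN hge
    set m := a ^^^ b with hm
    have Hopt : ∀ p ∈ sumGraph Γ Δ (x, y),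
        Gfun (sumGraph Γ Δ) N p ≠ (m : ℕ∞) ∧
        (Gfun (sumGraph Γ Δ) N p ≤ (m : ℕ∞) ∨
          ∃ q ∈ sumGraph Γ Δ p, Gfun (sumGraph Γ Δ) N q = (m : ℕ∞)) := by
      intro p hp
      rcases mem_sumGraph.1 hp with ⟨x', hx', rfl⟩ | ⟨y', hy', rfl⟩
      · -- move in the first component
        cases n with
        | zero =>
          obtain ⟨he, -⟩ := gfun_zero_fin hx
          rw [he] at hx'
          exact absurd hx' (Finset.notMem_empty x')
        | succ n₀ =>
          have hN₀ : n₀ + k = N := by omega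
          obtain ⟨h1, hcond⟩ := fin_succ (show Gfun Γ (n₀ + 1) x ≠ ⊤ by rw [hx]; simp)
          have hamex : mexF (Γ x) (Gfun Γ n₀) = a := by exact_mod_cast h1.symm.trans hx
          rcases hcond x' hx' with hle | ⟨z, hz, hzv⟩
          · obtain ⟨a₁, ha₁⟩ := ne_top_ex (ne_top_of_le_coe hle)
            have ha₁a : a₁ ≠ a := by
              intro hc
              exact mexF_spec (Γ x) (Gfun Γ n₀) x' hx'
                (by rw [ha₁, hc]; exact_mod_cast hamex.symm)
            have ha₁le : a₁ ≤ a := by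
              rw [ha₁, hamex] at hle; exact_mod_cast hle
            have hv : Gfun (sumGraph Γ Δ) N (x', y) = ((a₁ ^^^ b : ℕ) : ℕ∞) := by
              have h2 := ih n₀ k x' y a₁ b (by omega) ha₁ hy
              rwa [hN₀] at h2
            constructor
            · rw [hv]
              intro hcontra
              exact ha₁a (xor_right_inj (show a₁ ^^^ b = a ^^^ b by exact_mod_cast hcontra))
            · by_cases hle2 : a₁ ^^^ b ≤ m
              · left; rw [hv]; exact_mod_cast hle2
              · right
                have hlt2 : m < a₁ ^^^ b := lt_of_not_ge hle2
                rcases Nat.lt_xor_cases hlt2 with hc1 | hc2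
                · exfalso
                  rw [hm, xor_xor_right] at hc1
                  omega
                · cases k with
                  | zero => obtain ⟨-, hb0⟩ := gfun_zero_fin hy; omega
                  | succ k₀ =>
                    obtain ⟨hy1, -⟩ := fin_succ (show Gfun Δ (k₀ + 1) y ≠ ⊤ by rw [hy]; simp)
                    have hbmex : mexF (Δ y) (Gfun Δ k₀) = b := by
                      exact_mod_cast hy1.symm.trans hy
                    obtain ⟨y', hy', hy'v⟩ := mexF_min
                      (show m ^^^ a₁ < mexF (Δ y) (Gfun Δ k₀) by omega)
                    have hq := ih n₀ k₀ x' y' a₁ (m ^^^ a₁) (by omega) ha₁ hy'v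
                    rw [xor_mid] at hq
                    refine ⟨(x', y'), sum_mem_right hy', ?_⟩
                    rw [gfun_stab_ge (show Gfun (sumGraph Γ Δ) (n₀ + k₀) (x', y') ≠ ⊤ by
                      rw [hq]; simp) (show n₀ + k₀ ≤ N by omega), hq]
          · rw [hamex] at hzv
            have hzval : Gfun (sumGraph Γ Δ) N (z, y) = (m : ℕ∞) := by
              have h2 := ih n₀ k z y a b (by omega) hzv hy
              rwa [hN₀] at h2
            exact ⟨fun hcontra => gfun_opt_ne hcontra (sum_mem_left hz) hzval,
              Or.inr ⟨(z, y), sum_mem_left hz, hzval⟩⟩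
      · -- move in the second component
        cases k with
        | zero =>
          obtain ⟨he, -⟩ := gfun_zero_fin hy
          rw [he] at hy'
          exact absurd hy' (Finset.notMem_empty y')
        | succ k₀ =>
          have hN₀ : n + k₀ = N := by omega
          obtain ⟨h1, hcond⟩ := fin_succ (show Gfun Δ (k₀ + 1) y ≠ ⊤ by rw [hy]; simp)
          have hbmex : mexF (Δ y) (Gfun Δ k₀) = b := by exact_mod_cast h1.symm.trans hy
          rcases hcond y' hy' with hle | ⟨z, hz, hzv⟩
          · obtain ⟨b₁, hb₁⟩ := ne_top_ex (ne_top_of_le_coe hle)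
            have hb₁b : b₁ ≠ b := by
              intro hc
              exact mexF_spec (Δ y) (Gfun Δ k₀) y' hy'
                (by rw [hb₁, hc]; exact_mod_cast hbmex.symm)
            have hb₁le : b₁ ≤ b := by
              rw [hb₁, hbmex] at hle; exact_mod_cast hle
            have hv : Gfun (sumGraph Γ Δ) N (x, y') = ((a ^^^ b₁ : ℕ) : ℕ∞) := by
              have h2 := ih n k₀ x y' a b₁ (by omega) hx hb₁
              rwa [hN₀] at h2
            constructor
            · rw [hv]
              intro hcontra
              exact hb₁b (xor_left_inj (show a ^^^ b₁ = a ^^^ b by exact_mod_cast hcontra))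
            · by_cases hle2 : a ^^^ b₁ ≤ m
              · left; rw [hv]; exact_mod_cast hle2
              · right
                have hlt2 : m < a ^^^ b₁ := lt_of_not_ge hle2
                rcases Nat.lt_xor_cases hlt2 with hc1 | hc2
                · -- m ^^^ b₁ < a
                  cases n with
                  | zero => obtain ⟨-, ha0⟩ := gfun_zero_fin hx; omega
                  | succ n₀ =>
                    obtain ⟨hx1, -⟩ := fin_succ (show Gfun Γ (n₀ + 1) x ≠ ⊤ by rw [hx]; simp)
                    have hamex : mexF (Γ x) (Gfun Γ n₀) = a := by
                      exact_mod_cast hx1.symm.trans hx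
                    obtain ⟨x', hx', hx'v⟩ := mexF_min
                      (show m ^^^ b₁ < mexF (Γ x) (Gfun Γ n₀) by omega)
                    have hq := ih n₀ k₀ x' y' (m ^^^ b₁) b₁ (by omega) hx'v hb₁
                    rw [xor_xor_right] at hq
                    refine ⟨(x', y'), sum_mem_left hx', ?_⟩
                    rw [gfun_stab_ge (show Gfun (sumGraph Γ Δ) (n₀ + k₀) (x', y') ≠ ⊤ by
                      rw [hq]; simp) (show n₀ + k₀ ≤ N by omega), hq]
                · exfalso
                  rw [hm, Nat.xor_comm a b, xor_xor_right] at hc2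
                  omega
          · rw [hbmex] at hzv
            have hzval : Gfun (sumGraph Γ Δ) N (x, z) = (m : ℕ∞) := by
              have h2 := ih n k₀ x z a b (by omega) hx hzv
              rwa [hN₀] at h2
            exact ⟨fun hcontra => gfun_opt_ne hcontra (sum_mem_right hz) hzval,
              Or.inr ⟨(x, z), sum_mem_right hz, hzval⟩⟩
    have hmexm : mexF (sumGraph Γ Δ (x, y)) (Gfun (sumGraph Γ Δ) N) = m := by
      apply mexF_eq
      · exact fun p hp => (Hopt p hp).1
      · intro j hj
        rcases Nat.lt_xor_cases hj with h1 | h2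
        · -- j ^^^ b < a
          cases n with
          | zero => obtain ⟨-, ha0⟩ := gfun_zero_fin hx; omega
          | succ n₀ =>
            obtain ⟨hx1, -⟩ := fin_succ (show Gfun Γ (n₀ + 1) x ≠ ⊤ by rw [hx]; simp)
            have hamex : mexF (Γ x) (Gfun Γ n₀) = a := by exact_mod_cast hx1.symm.trans hx
            obtain ⟨x', hx', hx'v⟩ := mexF_min
              (show j ^^^ b < mexF (Γ x) (Gfun Γ n₀) by omega)
            have h3 := ih n₀ k x' y (j ^^^ b) b (by omega) hx'v hy
            rw [xor_xor_right] at h3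
            refine ⟨(x', y), sum_mem_left hx', ?_⟩
            rwa [show n₀ + k = N by omega] at h3
        · -- j ^^^ a < b
          cases k with
          | zero => obtain ⟨-, hb0⟩ := gfun_zero_fin hy; omega
          | succ k₀ =>
            obtain ⟨hy1, -⟩ := fin_succ (show Gfun Δ (k₀ + 1) y ≠ ⊤ by rw [hy]; simp)
            have hbmex : mexF (Δ y) (Gfun Δ k₀) = b := by exact_mod_cast hy1.symm.trans hy
            obtain ⟨y', hy', hy'v⟩ := mexF_min
              (show j ^^^ a < mexF (Δ y) (Gfun Δ k₀) by omega)
            have h3 := ih n k₀ x y' a (j ^^^ a) (by omega) hx hy'v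
            rw [xor_mid] at h3
            refine ⟨(x, y'), sum_mem_right hy', ?_⟩
            rwa [show n + k₀ = N by omega] at h3
    rw [hnk, gfun_succ, hmexm, if_pos (fun p hp => (Hopt p hp).2)]

lemma xor_of {V W : Type*} {Γ : V → Finset V} {Δ : W → Finset W} {n k NN : ℕ}
    {x : V} {y : W} {a b mm : ℕ}
    (hx : Gfun Γ n x = (a : ℕ∞)) (hy : Gfun Δ k y = (b : ℕ∞))
    (hS : Gfun (sumGraph Γ Δ) NN (x, y) = (mm : ℕ∞)) : mm = a ^^^ b := by
  have h1 := sum_val Γ Δ (n + k) n k x y a b le_rfl hx hy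
  have h2 := gfun_stab_ge (show Gfun (sumGraph Γ Δ) (n + k) (x, y) ≠ ⊤ by rw [h1]; simp)
    (le_max_left (n + k) NN)
  have h3 := gfun_stab_ge (show Gfun (sumGraph Γ Δ) NN (x, y) ≠ ⊤ by rw [hS]; simp)
    (le_max_right (n + k) NN)
  rw [h1] at h2
  rw [hS] at h3
  exact_mod_cast h3.symm.trans h2

end SumVal
section Swap

lemma gfun_iso {V W : Type*} (Γ : V → Finset V) (Δ : W → Finset W) (e : V ≃ W)
    (h : ∀ v, Δ (e v) = (Γ v).image e) : ∀ n v, Gfun Δ n (e v) = Gfun Γ n v := by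
  intro n
  induction n with
  | zero =>
    intro v
    rw [gfun_zero, gfun_zero, h v]
    simp [Finset.image_eq_empty]
  | succ n ih =>
    intro v
    have hfun : (fun u => Gfun Δ n (e u)) = Gfun Γ n := funext ih
    have hmex : mexF (Δ (e v)) (Gfun Δ n) = mexF (Γ v) (Gfun Γ n) := by
      rw [h v, mexF_image, hfun]
    rw [gfun_succ, gfun_succ, hmex]
    refine if_congr ?_ rfl rfl
    constructor
    · intro hc u hu
      rcases hc (e u) (by rw [h v]; exact Finset.mem_image_of_mem e hu) with h1 | ⟨z, hz, hzv⟩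
      · left; rw [← ih u]; exact h1
      · right
        rw [h u] at hz
        obtain ⟨z', hz', rfl⟩ := Finset.mem_image.1 hz
        exact ⟨z', hz', by rw [← ih z']; exact hzv⟩
    · intro hc w hw
      rw [h v] at hw
      obtain ⟨u, hu, rfl⟩ := Finset.mem_image.1 hw
      rcases hc u hu with h1 | ⟨z, hz, hzv⟩
      · left; rw [ih u]; exact h1
      · right
        exact ⟨e z, by rw [h u]; exact Finset.mem_image_of_mem e hz, by rw [ih z]; exact hzv⟩

lemma gfun_swap {V W : Type*} (Γ : V → Finset V) (Δ : W → Finset W) (n : ℕ) (x : V) (y : W) :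
    Gfun (sumGraph Δ Γ) n (y, x) = Gfun (sumGraph Γ Δ) n (x, y) := by
  refine gfun_iso (sumGraph Γ Δ) (sumGraph Δ Γ) (Equiv.prodComm V W) ?_ n (x, y)
  rintro ⟨u, w⟩
  ext ⟨c, d⟩
  simp only [Equiv.prodComm_apply, Prod.swap_prod_mk, sumGraph, Finset.mem_union,
    Finset.mem_image, Prod.mk.injEq]
  aesop

end Swap

section Projection

lemma q_step {V W : Type*} (Γ : V → Finset V) (Δ : W → Finset W) (N : ℕ)
    (IH : ∀ x y, Gfun (sumGraph Γ Δ) N (x, y) ≠ ⊤ → Gfun Γ N x ≠ ⊤ ∧ Gfun Δ N y ≠ ⊤)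
    (x : V) (y : W) (h : Gfun (sumGraph Γ Δ) (N + 1) (x, y) ≠ ⊤) :
    Gfun Γ (N + 1) x ≠ ⊤ := by
  rcases eq_or_ne (Gfun Γ N x) ⊤ with hGx | hGx
  case inr => rw [gfun_stab Γ N x hGx]; exact hGx
  obtain ⟨hmval, hcondS⟩ := fin_succ h
  set m := mexF (sumGraph Γ Δ (x, y)) (Gfun (sumGraph Γ Δ) N) with hm
  have hspecS : ∀ p ∈ sumGraph Γ Δ (x, y), Gfun (sumGraph Γ Δ) N p ≠ (m : ℕ∞) :=
    mexF_spec _ _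
  set a := mexF (Γ x) (Gfun Γ N) with ha
  suffices hcond : ∀ x' ∈ Γ x,
      Gfun Γ N x' ≤ (a : ℕ∞) ∨ ∃ z ∈ Γ x', Gfun Γ N z = (a : ℕ∞) by
    rw [gfun_succ, ← ha, if_pos hcond]
    simp
  have hgood : ∀ x' ∈ Γ x, Gfun Γ N x' ≠ ⊤ →
      (Gfun Γ N x' ≤ (a : ℕ∞) ∨ ∃ z ∈ Γ x', Gfun Γ N z = (a : ℕ∞)) := by
    intro x' hx' hne
    obtain ⟨a₁, ha₁⟩ := ne_top_ex hne
    rcases Nat.lt_or_ge a₁ a with hlt | hge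
    · left; rw [ha₁]; exact_mod_cast hlt.le
    · have hne2 : a₁ ≠ a := by
        intro hc
        exact mexF_spec (Γ x) (Gfun Γ N) x' hx' (by rw [ha₁, hc, ha])
      right
      exact gfun_reply_lt ha₁ (by omega)
  intro x' hx'
  rcases hcondS (x', y) (sum_mem_left hx') with hle | ⟨q, hq, hqm⟩
  · exact hgood x' hx' (IH x' y (ne_top_of_le_coe hle)).1
  rcases mem_sumGraph.1 hq with hq2 | hq2
  case inr =>
    obtain ⟨y', hy', rfl⟩ := hq2
    exact hgood x' hx' (IH x' y' (by rw [hqm]; simp)).1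
  obtain ⟨x'', hx'', rfl⟩ := hq2
  obtain ⟨hfx'', hfy⟩ := IH x'' y (by rw [hqm]; simp)
  obtain ⟨a₂, ha₂⟩ := ne_top_ex hfx''
  obtain ⟨b, hb⟩ := ne_top_ex hfy
  have hmab : m = a₂ ^^^ b := xor_of ha₂ hb hqm
  have hA : a = m ^^^ b := by
    rw [ha]
    apply mexF_eq
    · intro w hw hcontra
      have hsum := sum_val Γ Δ (N + N) N N w y (m ^^^ b) b le_rfl hcontra hb
      rw [xor_xor_right] at hsum
      have hneq := hspecS (w, y) (sum_mem_left hw)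
      have hT : Gfun (sumGraph Γ Δ) N (w, y) = ⊤ := by
        by_contra h'
        rw [gfun_stab_ge h' (Nat.le_add_right N N)] at hsum
        exact hneq hsum
      rcases hcondS (w, y) (sum_mem_left hw) with hle | ⟨q', hq', hq'm⟩
      · rw [hT] at hle; exact absurd hle (by simp)
      rcases mem_sumGraph.1 hq' with ⟨w', hw', rfl⟩ | ⟨y', hy', rfl⟩
      · obtain ⟨hf1, -⟩ := IH w' y (by rw [hq'm]; simp)
        obtain ⟨a₄, ha₄⟩ := ne_top_ex hf1
        have h4 : m = a₄ ^^^ b := xor_of ha₄ hb hq'm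
        have ha₄v : a₄ = m ^^^ b := by rw [h4, xor_xor_right]
        exact gfun_opt_ne hcontra hw' (by rw [ha₄, ha₄v])
      · obtain ⟨-, hf2⟩ := IH w y' (by rw [hq'm]; simp)
        obtain ⟨b₃, hb₃⟩ := ne_top_ex hf2
        have hx3 : m = (m ^^^ b) ^^^ b₃ := xor_of hcontra hb₃ hq'm
        have hbb : b₃ = b := by
          apply xor_left_inj (c := m ^^^ b)
          rw [← hx3, Nat.xor_assoc, Nat.xor_self, Nat.xor_zero]
        exact gfun_opt_ne hb hy' (by rw [hb₃, hbb])
    · intro j hj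
      rcases Nat.lt_xor_cases hj with h1 | h2
      · obtain ⟨p, hp, hpv⟩ := mexF_min
          (show j ^^^ b < mexF (sumGraph Γ Δ (x, y)) (Gfun (sumGraph Γ Δ) N) by omega)
        rcases mem_sumGraph.1 hp with ⟨xs, hxs, rfl⟩ | ⟨y', hy', rfl⟩
        · obtain ⟨hf1, -⟩ := IH xs y (by rw [hpv]; simp)
          obtain ⟨a₁, ha₁⟩ := ne_top_ex hf1
          have hj1 : (j ^^^ b : ℕ) = a₁ ^^^ b := xor_of ha₁ hb hpv
          have hj2 : a₁ = j := xor_right_inj hj1.symm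
          exact ⟨xs, hxs, by rw [ha₁, hj2]⟩
        · exact absurd hGx (IH x y' (by rw [hpv]; simp)).1
      · obtain ⟨y', hy', hy'v⟩ := gfun_reply_lt hb h2
        rcases hcondS (x, y') (sum_mem_right hy') with hle | ⟨q', hq', hq'm⟩
        · exact absurd hGx (IH x y' (ne_top_of_le_coe hle)).1
        rcases mem_sumGraph.1 hq' with ⟨xs, hxs, rfl⟩ | ⟨y'', hy'', rfl⟩
        · obtain ⟨hf1, -⟩ := IH xs y' (by rw [hq'm]; simp)
          obtain ⟨a₅, ha₅⟩ := ne_top_ex hf1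
          have h5 : m = a₅ ^^^ (j ^^^ m) := xor_of ha₅ hy'v hq'm
          have h6 : a₅ = j := by
            have := congrArg (fun t => t ^^^ (j ^^^ m)) h5
            simp only [Nat.xor_assoc, Nat.xor_self, Nat.xor_zero] at this
            rw [xor_mid] at this
            exact this.symm
          exact ⟨xs, hxs, by rw [ha₅, h6]⟩
        · exact absurd hGx (IH x y'' (by rw [hq'm]; simp)).1
  right
  refine ⟨x'', hx'', ?_⟩
  have haa : a₂ = a := by rw [hA, hmab, xor_xor_right]
  rw [ha₂, haa]

lemma q_main {V W : Type*} (Γ : V → Finset V) (Δ : W → Finset W) :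
    ∀ (N : ℕ) (x : V) (y : W), Gfun (sumGraph Γ Δ) N (x, y) ≠ ⊤ →
      Gfun Γ N x ≠ ⊤ ∧ Gfun Δ N y ≠ ⊤ := by
  intro N
  induction N with
  | zero =>
    intro x y h
    rw [gfun_zero] at h
    split_ifs at h with hc
    · obtain ⟨h1, h2⟩ := sumGraph_empty.1 hc
      constructor <;> rw [gfun_zero] <;> simp [h1, h2]
    · exact absurd rfl h
  | succ N ih =>
    intro x y h
    refine ⟨q_step Γ Δ N ih x y h, ?_⟩
    have ih' : ∀ (y : W) (x : V), Gfun (sumGraph Δ Γ) N (y, x) ≠ ⊤ →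
        Gfun Δ N y ≠ ⊤ ∧ Gfun Γ N x ≠ ⊤ := by
      intro y x hh
      rw [gfun_swap] at hh
      exact ⟨(ih x y hh).2, (ih x y hh).1⟩
    exact q_step Δ Γ N ih' y x (by rw [gfun_swap]; exact h)

end Projection
/-- `G + H` has infinite rank iff at least one of `G`, `H` has
infinite rank. -/
theorem stmt3 {V W : Type*} (Γ : V → Finset V) (Δ : W → Finset W) (x : V) (y : W) :
    InfiniteRank (sumGraph Γ Δ) (x, y) ↔ (InfiniteRank Γ x ∨ InfiniteRank Δ y) := by
  constructor
  · intro h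
    by_contra hc
    push_neg at hc
    obtain ⟨hx, hy⟩ := hc
    simp only [InfiniteRank, not_forall] at hx hy
    obtain ⟨n, hn⟩ := hx
    obtain ⟨k, hk⟩ := hy
    obtain ⟨a, ha⟩ := ne_top_ex hn
    obtain ⟨b, hb⟩ := ne_top_ex hk
    have hs := sum_val Γ Δ (n + k) n k x y a b le_rfl ha hb
    rw [h (n + k)] at hs
    exact absurd hs.symm (by simp)
  · intro h N
    by_contra hN
    obtain ⟨h1, h2⟩ := q_main Γ Δ N x y hN
    rcases h with h | h
    exacts [h1 (h N), h2 (h N)]
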